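/- Let H be an n×n complex Hermitian matrix and let λ be an eigenvalue of H of algebraic multiplicity 1. Then there exists a vector u : Fin n → ℂ with H.mulVec u = λ • u and ∑_i conj(u i)·(u i) = 1, such that for all i, j one has (adjugate(λ·1 − H)) i j = c · (u i) · conj(u j), where c = ∏_{μ} (λ − μ), the product running over the multiset of roots of the characteristic polynomial of H different from λ (counted with multiplicity; there are n − 1 of them). In particular adjugate(λ·1 − H) has rank one and all of its columns are pairwise parallel. -/

import Mathlib

open scoped ComplexConjugate

open Polynomial Matrix in
private lemma aux_charmatrix_conj {m : Type*} [Fintype m] [DecidableEq m]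
    (U A V : Matrix m m ℂ) (hUV : U * V = 1) :
    charmatrix (U * A * V) = U.map C * charmatrix A * V.map C := by
  have hmapUV : U.map (C : ℂ →+* ℂ[X]) * V.map C = 1 := by
    rw [← Matrix.map_mul, hUV]
    simp
  have h1 : U.map (C : ℂ →+* ℂ[X]) * Matrix.scalar m (X : ℂ[X]) * V.map C
      = Matrix.scalar m (X : ℂ[X]) := by
    rw [(Matrix.scalar_commute (X : ℂ[X]) (fun r => Commute.all _ _) (U.map C)).symm.eq,
      mul_assoc, hmapUV, mul_one]
  simp only [charmatrix, RingHom.mapMatrix_apply]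
  rw [mul_sub, sub_mul, h1, Matrix.map_mul, Matrix.map_mul]

open Polynomial Matrix in
private lemma aux_charpoly_conj {m : Type*} [Fintype m] [DecidableEq m]
    (U A V : Matrix m m ℂ) (hUV : U * V = 1) :
    (U * A * V).charpoly = A.charpoly := by
  have hmapUV : U.map (C : ℂ →+* ℂ[X]) * V.map C = 1 := by
    rw [← Matrix.map_mul, hUV]
    simp
  rw [charpoly, charpoly, aux_charmatrix_conj U A V hUV, det_mul, det_mul,
    mul_right_comm, ← det_mul, hmapUV, det_one, one_mul]

open Matrix in
private lemma aux_adjugate_conj {m : Type*} [Fintype m] [DecidableEq m]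
    (U A V : Matrix m m ℂ) (hUV : U * V = 1) (hVU : V * U = 1) :
    adjugate (U * A * V) = U * adjugate A * V := by
  have hadjU : adjugate U = U.det • V := by
    calc adjugate U = adjugate U * (U * V) := by rw [hUV, mul_one]
    _ = adjugate U * U * V := by rw [mul_assoc]
    _ = (U.det • 1) * V := by rw [adjugate_mul]
    _ = U.det • V := by rw [Matrix.smul_mul, one_mul]
  have hadjV : adjugate V = V.det • U := by
    calc adjugate V = adjugate V * (V * U) := by rw [hVU, mul_one]
    _ = adjugate V * V * U := by rw [mul_assoc]
    _ = (V.det • 1) * U := by rw [adjugate_mul]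
    _ = V.det • U := by rw [Matrix.smul_mul, one_mul]
  have hdet : V.det * U.det = 1 := by rw [← det_mul, hVU, det_one]
  rw [adjugate_mul_distrib, adjugate_mul_distrib, hadjU, hadjV, smul_mul_assoc,
    mul_smul_comm, mul_smul_comm, smul_smul, hdet, one_smul, ← mul_assoc]

/-- Let `H` be an `n×n` complex Hermitian matrix and let `λ` be an eigenvalue of `H`
of algebraic multiplicity 1.  Then there is a unit eigenvector `u` of `H` for `λ`
such that `adjugate (λ•1 - H) i j = c * u i * conj (u j)`, where
`c = ∏ (λ - μ)` over the multiset of roots `μ ≠ λ` of the characteristic polynomial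
(counted with multiplicity).  In particular the adjugate has rank one and all of its
columns are pairwise parallel. -/
theorem adjugate_charmatrix_rank_one {n : ℕ} (H : Matrix (Fin n) (Fin n) ℂ)
    (hH : H.IsHermitian) (lam : ℂ)
    (hmul : Polynomial.rootMultiplicity lam (Matrix.charpoly H) = 1) :
    (∃ u : Fin n → ℂ,
        H.mulVec u = lam • u ∧
        (∑ i, conj (u i) * u i) = 1 ∧
        ∀ i j : Fin n,
          (lam • (1 : Matrix (Fin n) (Fin n) ℂ) - H).adjugate i j
            = ((((Matrix.charpoly H).roots.filter (fun μ => μ ≠ lam)).map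
                (fun μ => lam - μ)).prod) * u i * conj (u j)) ∧
      ((lam • (1 : Matrix (Fin n) (Fin n) ℂ) - H).adjugate).rank = 1 ∧
      ∀ j k i i' : Fin n,
        (lam • (1 : Matrix (Fin n) (Fin n) ℂ) - H).adjugate i j *
            (lam • (1 : Matrix (Fin n) (Fin n) ℂ) - H).adjugate i' k
          = (lam • (1 : Matrix (Fin n) (Fin n) ℂ) - H).adjugate i' j *
            (lam • (1 : Matrix (Fin n) (Fin n) ℂ) - H).adjugate i k := by
  classical
  set U : Matrix (Fin n) (Fin n) ℂ := (hH.eigenvectorUnitary : Matrix (Fin n) (Fin n) ℂ)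
    with hUdef
  set μ : Fin n → ℂ := fun i => (hH.eigenvalues i : ℂ) with hμdef
  have hUV : U * star U = 1 := Matrix.mem_unitaryGroup_iff.mp hH.eigenvectorUnitary.2
  have hVU : star U * U = 1 := Matrix.mem_unitaryGroup_iff'.mp hH.eigenvectorUnitary.2
  have hspec : H = U * Matrix.diagonal μ * star U := hH.spectral_theorem
  -- characteristic polynomial
  have hchar : H.charpoly = ∏ i, (Polynomial.X - Polynomial.C (μ i)) := by
    conv_lhs => rw [hspec]
    rw [aux_charpoly_conj _ _ _ hUV]
    have hcm : Matrix.charmatrix (Matrix.diagonal μ)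
        = Matrix.diagonal (fun i => Polynomial.X - Polynomial.C (μ i)) := by
      ext i j
      rcases eq_or_ne i j with rfl | h
      · simp
      · simp [h, Matrix.diagonal_apply_ne _ h]
    rw [Matrix.charpoly, hcm, Matrix.det_diagonal]
  have hroots : H.charpoly.roots = Finset.univ.val.map μ := by
    rw [hchar]
    have h2 := Polynomial.roots_multiset_prod_X_sub_C (Finset.univ.val.map μ)
    rw [← h2]
    congr 1
    rw [Finset.prod, Multiset.map_map]
    rfl
  have hcount : (Finset.univ.val.map μ).count lam = 1 := by
    rw [← hroots, Polynomial.count_roots, hmul]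
  have hcard : (Finset.univ.val.filter (fun i => lam = μ i)).card = 1 := by
    rw [← Multiset.count_map, hcount]
  obtain ⟨i₀, hi₀⟩ := Multiset.card_eq_one.mp hcard
  have hmem : ∀ j, lam = μ j ↔ j = i₀ := by
    intro j
    constructor
    · intro h
      have hjmem : j ∈ Finset.univ.val.filter (fun i => lam = μ i) :=
        Multiset.mem_filter.mpr ⟨by simp, h⟩
      rw [hi₀] at hjmem
      simpa using hjmem
    · rintro rfl
      have hj : j ∈ ({j} : Multiset (Fin n)) := Multiset.mem_singleton_self _
      rw [← hi₀] at hj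
      exact (Multiset.mem_filter.mp hj).2
  have hlam : μ i₀ = lam := ((hmem i₀).mpr rfl).symm
  have hne : ∀ j, j ≠ i₀ → μ j ≠ lam := fun j hj h => hj ((hmem j).mp h.symm)
  -- eigenvector
  set u : Fin n → ℂ := ⇑(hH.eigenvectorBasis i₀) with hudef
  have hu1 : H.mulVec u = lam • u := by
    rw [hudef, hH.mulVec_eigenvectorBasis i₀]
    funext i
    simp only [Pi.smul_apply, smul_eq_mul]
    rw [← hlam, hμdef]
    simp [Complex.real_smul]
  have hu2 : (∑ i, conj (u i) * u i) = 1 := by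
    have horth := orthonormal_iff_ite.mp hH.eigenvectorBasis.orthonormal i₀ i₀
    simp only [if_pos rfl, PiLp.inner_apply, RCLike.inner_apply] at horth
    simpa [hudef, mul_comm] using horth
  -- the diagonal matrix and its adjugate
  set c : ℂ := ∏ j ∈ Finset.univ.erase i₀, (lam - μ j) with hcdef
  have hE : lam • (1 : Matrix (Fin n) (Fin n) ℂ) - H
      = U * Matrix.diagonal (fun i => lam - μ i) * star U := by
    have hd : Matrix.diagonal (fun i => lam - μ i)
        = lam • (1 : Matrix (Fin n) (Fin n) ℂ) - Matrix.diagonal μ := by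
      ext i j
      rcases eq_or_ne i j with rfl | h
      · simp
      · simp [Matrix.diagonal_apply_ne _ h, Matrix.one_apply_ne h]
    rw [hd, Matrix.mul_sub, Matrix.sub_mul, ← hspec, Matrix.mul_smul, Matrix.smul_mul,
      mul_one, hUV]
  have hadjE : Matrix.adjugate (Matrix.diagonal (fun i => lam - μ i))
      = Matrix.diagonal (fun i => if i = i₀ then c else 0) := by
    rw [Matrix.adjugate_diagonal]
    refine congrArg Matrix.diagonal (funext fun i => ?_)
    rcases eq_or_ne i i₀ with rfl | h
    · simp [hcdef]
    · rw [if_neg h]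
      refine Finset.prod_eq_zero (Finset.mem_erase.mpr ⟨Ne.symm h, Finset.mem_univ _⟩) ?_
      rw [hlam, sub_self]
  have hadj : (lam • (1 : Matrix (Fin n) (Fin n) ℂ) - H).adjugate
      = U * Matrix.diagonal (fun i => if i = i₀ then c else 0) * star U := by
    rw [hE, aux_adjugate_conj _ _ _ hUV hVU, hadjE]
  have hentry : ∀ i j, (lam • (1 : Matrix (Fin n) (Fin n) ℂ) - H).adjugate i j
      = c * u i * conj (u j) := by
    intro i j
    rw [hadj, Matrix.mul_apply]
    simp only [Matrix.mul_diagonal, Matrix.star_apply, mul_ite, ite_mul, mul_zero, zero_mul]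
    rw [Finset.sum_ite_eq' Finset.univ i₀]
    simp only [Finset.mem_univ, if_pos]
    have hui : U i i₀ = u i := rfl
    have huj : (star (U j i₀) : ℂ) = conj (u j) := rfl
    rw [hui, huj]
    ring
  -- identify c with the multiset product
  have hcprod : ((((Matrix.charpoly H).roots.filter (fun μ' => μ' ≠ lam)).map
      (fun μ' => lam - μ')).prod) = c := by
    rw [hroots, Multiset.filter_map, Multiset.map_map]
    rw [Multiset.filter_congr (q := fun j => j ≠ i₀)
      (fun j _ => by
        simp only [Function.comp_apply]
        constructor
        · intro h hj
          exact h (by rw [hj, hlam])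
        · intro h hj
          exact hne j h hj)]
    have hfv : Multiset.filter (fun j => j ≠ i₀) Finset.univ.val
        = (Finset.univ.erase i₀).val := by
      rw [← Finset.filter_val, Finset.filter_ne']
    rw [hfv]
    rfl
  -- nonvanishing
  have hc0 : c ≠ 0 := by
    rw [hcdef]
    refine Finset.prod_ne_zero_iff.mpr fun j hj => sub_ne_zero.mpr fun h => ?_
    exact hne j (Finset.ne_of_mem_erase hj) h.symm
  -- rank
  have hdetU : IsUnit U.det :=
    IsUnit.of_mul_eq_one _ (by rw [← Matrix.det_mul, hUV, Matrix.det_one])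
  have hdetV : IsUnit (star U).det :=
    IsUnit.of_mul_eq_one _ (by rw [← Matrix.det_mul, hVU, Matrix.det_one])
  have hrank : ((lam • (1 : Matrix (Fin n) (Fin n) ℂ) - H).adjugate).rank = 1 := by
    rw [hadj, Matrix.rank_mul_eq_left_of_isUnit_det _ _ hdetV,
      Matrix.rank_mul_eq_right_of_isUnit_det _ _ hdetU, Matrix.rank_diagonal]
    rw [Fintype.card_eq_one_iff]
    refine ⟨⟨i₀, by simp [hc0]⟩, ?_⟩
    rintro ⟨y, hy⟩
    have hyy : y = i₀ := by
      by_contra h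
      exact hy (by simp [h])
    exact Subtype.ext hyy
  refine ⟨⟨u, hu1, hu2, fun i j => by rw [hentry, hcprod]⟩, hrank, fun j k i i' => by
    rw [hentry, hentry, hentry, hentry]; ring⟩
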